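/- arXiv:1502.03691 — 10 statements merged into one kernel-verified Lean document; each statement's English description precedes it below -/
import Mathlib

section
/- Let R be a commutative ring with nonzero identity and I a nonzero ideal of R with √I ≠ I. If the zero-divisor graph Γ(R/I) has at least 2 vertices, then the ideal-based zero-divisor graph Γ_I(R) is not complemented. -/
open Ideal Polynomial

-- The zero-divisor graph Γ(S): vertices are the nonzero zero-divisors,
-- distinct vertices adjacent iff their product is zero.  We realize it as a
-- graph on the whole ring whose adjacency relation encodes vertexhood.
def zdVertexSet (S : Type*) [CommRing S] : Set S :=
  {x | x ≠ 0 ∧ ∃ y, y ≠ 0 ∧ x * y = 0}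

def zdGraph (S : Type*) [CommRing S] : SimpleGraph S where
  Adj x y := x ≠ y ∧ x ≠ 0 ∧ y ≠ 0 ∧ x * y = 0
  symm := ⟨fun x y ⟨h1, h2, h3, h4⟩ => ⟨h1.symm, h3, h2, by rwa [mul_comm]⟩⟩
  loopless := ⟨fun x h => h.1 rfl⟩

-- The ideal-based zero-divisor graph Γ_I(R):
-- vertices {x ∈ R \ I : ∃ y ∈ R \ I, x*y ∈ I}, distinct x,y adjacent iff x*y ∈ I.
def idealVertexSet {R : Type*} [CommRing R] (I : Ideal R) : Set R :=
  {x | x ∉ I ∧ ∃ y, y ∉ I ∧ x * y ∈ I}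

def idealGraph {R : Type*} [CommRing R] (I : Ideal R) : SimpleGraph R where
  Adj x y := x ≠ y ∧ x ∉ I ∧ y ∉ I ∧ x * y ∈ I
  symm := ⟨fun x y ⟨h1, h2, h3, h4⟩ => ⟨h1.symm, h3, h2, by rwa [mul_comm]⟩⟩
  loopless := ⟨fun x h => h.1 rfl⟩

-- a ⊥ b : a and b are adjacent and no vertex is adjacent to both.
def Orth {V : Type*} (G : SimpleGraph V) (a b : V) : Prop :=
  G.Adj a b ∧ ∀ c, ¬(G.Adj a c ∧ G.Adj b c)

-- a ~ b : a and b are nonadjacent with exactly the same neighbors.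
def Sim {V : Type*} (G : SimpleGraph V) (a b : V) : Prop :=
  ¬G.Adj a b ∧ ∀ c, G.Adj a c ↔ G.Adj b c

-- A graph (with specified vertex set S) is complemented if every vertex has an
-- orthogonal partner.
def Complemented {V : Type*} (G : SimpleGraph V) (S : Set V) : Prop :=
  ∀ a ∈ S, ∃ b ∈ S, Orth G a b

def UniquelyComplemented {V : Type*} (G : SimpleGraph V) (S : Set V) : Prop :=
  Complemented G S ∧ ∀ a b c, Orth G a b → Orth G a c → Sim G b c
theorem stmt0 {R : Type*} [CommRing R] [Nontrivial R] (I : Ideal R)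
    (hI0 : I ≠ ⊥) (hrad : I.radical ≠ I)
    (h2 : (zdVertexSet (R ⧸ I)).Nontrivial) :
    ¬ Complemented (idealGraph I) (idealVertexSet I) := by
  classical
  intro hcomp
  obtain ⟨a, ha_rad, ha⟩ : ∃ a, a ∈ I.radical ∧ a ∉ I := by
    by_contra h
    push_neg at h
    exact hrad (le_antisymm (fun z hz => h z hz) I.le_radical)
  have hex : ∃ n, a ^ n ∈ I := ha_rad
  have hmI : a ^ (Nat.find hex) ∈ I := Nat.find_spec hex
  have h1I : (1 : R) ∉ I := fun h1 => ha (by simpa using I.mul_mem_left a h1)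
  have hm2 : 2 ≤ Nat.find hex := by
    by_contra h
    push_neg at h
    interval_cases h' : (Nat.find hex)
    · exact h1I (by simpa using hmI)
    · exact ha (by simpa using hmI)
  set m := Nat.find hex with hm
  set x := a ^ (m - 1) with hx
  have hxI : x ∉ I := Nat.find_min hex (by omega)
  have hx2 : x * x ∈ I := by
    have hxe : x * x = a ^ m * a ^ (m - 2) := by
      rw [hx, ← pow_add, ← pow_add]
      congr 1
      omega
    rw [hxe]
    exact I.mul_mem_right _ hmI
  obtain ⟨b, hbmem, ⟨hne, _, hbI, hxbI⟩, horth⟩ := hcomp x ⟨hxI, x, hxI, hx2⟩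
  by_cases hbx : b - x ∈ I
  · -- b ≡ x mod I
    by_cases hann : ∃ z, z ∉ I ∧ z * x ∈ I ∧ z - x ∉ I
    · obtain ⟨z, hzI, hzx, hzne⟩ := hann
      refine horth z ⟨⟨?_, hxI, hzI, ?_⟩, ⟨?_, hbI, hzI, ?_⟩⟩
      · intro h; exact hzne (by rw [← h]; simp)
      · rwa [mul_comm]
      · intro h; exact hzne (by rw [← h]; exact hbx)
      · have : b * z = (b - x) * z + z * x := by ring
        rw [this]
        exact I.add_mem (I.mul_mem_right z hbx) hzx
    · push_neg at hann
      set f := Ideal.Quotient.mk I with hf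
      have hx0 : f x ≠ 0 := fun h => hxI (Ideal.Quotient.eq_zero_iff_mem.mp h)
      have hxx : f x * f x = 0 := by
        rw [← _root_.map_mul]; exact Ideal.Quotient.eq_zero_iff_mem.mpr hx2
      have H : ∀ z : R ⧸ I, z * f x = 0 → z = 0 ∨ z = f x := by
        intro z hz
        by_cases hz0 : z = 0
        · exact Or.inl hz0
        · obtain ⟨z', rfl⟩ := Ideal.Quotient.mk_surjective z
          right
          have hz'I : z' ∉ I := fun h => hz0 (Ideal.Quotient.eq_zero_iff_mem.mpr h)
          have hz'x : z' * x ∈ I := by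
            rw [← Ideal.Quotient.eq_zero_iff_mem, _root_.map_mul]; exact hz
          exact Ideal.Quotient.eq.mpr (hann z' hz'I hz'x)
      obtain ⟨u, hu, v, hv, huv⟩ := h2
      have hwex : ∃ w ∈ zdVertexSet (R ⧸ I), w ≠ f x := by
        by_cases h : u = f x
        · exact ⟨v, hv, by rw [← h]; exact huv.symm⟩
        · exact ⟨u, hu, h⟩
      obtain ⟨w, ⟨hw0, s, hs0, hws⟩, hwx⟩ := hwex
      have hxwx0 : (f x * w) * f x = 0 := by
        rw [mul_right_comm, hxx, zero_mul]
      have hxw : f x * w = f x := by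
        rcases H (f x * w) hxwx0 with h0 | h1
        · rcases H w (by rw [mul_comm] at h0; exact h0) with h | h
          · exact absurd h hw0
          · exact absurd h hwx
        · exact h1
      have hxs : f x * s = f x := by
        rcases H (f x * s) (by rw [mul_right_comm, hxx, zero_mul]) with h0 | h1
        · rcases H s (by rw [mul_comm] at h0; exact h0) with h | h
          · exact absurd h hs0
          · exfalso
            apply hx0
            rw [← hxw, mul_comm, ← h]
            exact hws
        · exact h1
      apply hx0
      calc f x = f x * s := hxs.symm
        _ = (f x * w) * s := by rw [hxw]
        _ = f x * (w * s) := by ring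
        _ = 0 := by rw [hws, mul_zero]
  · -- b ≢ x mod I : use c = x + i for nonzero i ∈ I
    obtain ⟨i, hiI, hi0⟩ := Submodule.exists_mem_ne_zero_of_ne_bot hI0
    refine horth (x + i) ⟨⟨?_, hxI, ?_, ?_⟩, ⟨?_, hbI, ?_, ?_⟩⟩
    · intro h; exact hi0 (by linear_combination -h)
    · intro h; exact hxI (by simpa using I.sub_mem h hiI)
    · rw [mul_add]; exact I.add_mem hx2 (I.mul_mem_left x hiI)
    · intro h; exact hbx (by rw [h]; simpa using hiI)
    · intro h; exact hxI (by simpa using I.sub_mem h hiI)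
    · rw [mul_add]
      exact I.add_mem (by rwa [mul_comm]) (I.mul_mem_left b hiI)
end

section
/- Let R be a commutative ring with nonzero identity and I a proper ideal of R. If the zero-divisor graph Γ(R/I) is isomorphic to the complete graph K^1 (i.e., has exactly one vertex), then Γ_I(R) is isomorphic to the complete graph on |I| vertices. -/
open Ideal Polynomial

theorem stmt1 {R : Type*} [CommRing R] [Nontrivial R] (I : Ideal R) (hI : I ≠ ⊤)
    (h1 : ∃ a : R ⧸ I, zdVertexSet (R ⧸ I) = {a}) :
    Nonempty ((SimpleGraph.induce (idealVertexSet I) (idealGraph I)) ≃g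
      (⊤ : SimpleGraph I)) := by
  obtain ⟨a, ha⟩ := h1
  have haV : a ∈ zdVertexSet (R ⧸ I) := by rw [ha]; rfl
  obtain ⟨ha0, y, hy0, hay⟩ := haV
  have hya : y = a := by
    have : y ∈ zdVertexSet (R ⧸ I) := ⟨hy0, a, ha0, by rwa [mul_comm]⟩
    rw [ha] at this; exact this
  have haa : a * a = 0 := hya ▸ hay
  have hmem : ∀ x : R, x ∈ idealVertexSet I ↔ Ideal.Quotient.mk I x = a := by
    intro x
    constructor
    · rintro ⟨hxI, z, hzI, hxz⟩
      have hx0 : Ideal.Quotient.mk I x ≠ 0 := by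
        simpa [Ideal.Quotient.eq_zero_iff_mem] using hxI
      have hz0 : Ideal.Quotient.mk I z ≠ 0 := by
        simpa [Ideal.Quotient.eq_zero_iff_mem] using hzI
      have : Ideal.Quotient.mk I x ∈ zdVertexSet (R ⧸ I) :=
        ⟨hx0, Ideal.Quotient.mk I z, hz0, by
          rw [← _root_.map_mul, Ideal.Quotient.eq_zero_iff_mem]; exact hxz⟩
      rw [ha] at this; exact this
    · intro hx
      refine ⟨?_, ?_⟩
      · intro hxI
        apply ha0
        rw [← hx, Ideal.Quotient.eq_zero_iff_mem]; exact hxI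
      · obtain ⟨z, hz⟩ := Ideal.Quotient.mk_surjective (I := I) a
        refine ⟨z, ?_, ?_⟩
        · intro hzI
          apply ha0
          rw [← hz, Ideal.Quotient.eq_zero_iff_mem]; exact hzI
        · rw [← Ideal.Quotient.eq_zero_iff_mem, _root_.map_mul, hx, hz, haa]
  obtain ⟨x₀, hx₀⟩ := Ideal.Quotient.mk_surjective (I := I) a
  refine ⟨⟨⟨fun u => ⟨u.1 - x₀, ?_⟩, fun i => ⟨x₀ + i.1, ?_⟩, ?_, ?_⟩, ?_⟩⟩
  · rw [← Ideal.Quotient.eq_zero_iff_mem, map_sub, (hmem u.1).1 u.2, hx₀, sub_self]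
  · rw [hmem, map_add, hx₀, (Ideal.Quotient.eq_zero_iff_mem).2 i.2, add_zero]
  · rintro ⟨u, hu⟩; simp
  · rintro ⟨i, hi⟩; simp
  · rintro ⟨u, hu⟩ ⟨v, hv⟩
    simp only [Equiv.coe_fn_mk, SimpleGraph.comap_adj, SimpleGraph.top_adj, ne_eq,
      Subtype.mk.injEq, Function.Embedding.coe_subtype]
    constructor
    · intro h
      have huv : u ≠ v := by
        intro he; exact h (by rw [he])
      refine ⟨huv, hu.1, hv.1, ?_⟩
      rw [← Ideal.Quotient.eq_zero_iff_mem, _root_.map_mul, (hmem u).1 hu, (hmem v).1 hv, haa]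
    · rintro ⟨huv, -⟩ h
      exact huv (by have := sub_left_injective h; exact this)
end

section
/- Let R be a commutative ring with nonzero identity and I a radical ideal of R (√I = I). For vertices x, y of Γ_I(R): x ⊥ y in Γ_I(R) if and only if x + I ⊥ y + I in Γ(R/I). -/
open Ideal Polynomial

lemma key_rad {R : Type*} [CommRing R] {I : Ideal R} (hrad : I.radical = I)
    {a b : R} (ha : a ∉ I) (hab : a * b ∈ I) (heq : a - b ∈ I) : False := by
  apply ha
  rw [← hrad]
  refine ⟨2, ?_⟩
  have : a ^ 2 = a * b + a * (a - b) := by ring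
  rw [this]
  exact I.add_mem hab (I.mul_mem_left a heq)

lemma adj_iff {R : Type*} [CommRing R] {I : Ideal R} (hrad : I.radical = I)
    (a b : R) :
    (idealGraph I).Adj a b ↔ (zdGraph (R ⧸ I)).Adj (Ideal.Quotient.mk I a) (Ideal.Quotient.mk I b) := by
  show (_ ∧ _ ∧ _ ∧ _) ↔ (_ ∧ _ ∧ _ ∧ _)
  constructor
  · rintro ⟨h1, h2, h3, h4⟩
    refine ⟨fun h => key_rad hrad h2 h4 (Ideal.Quotient.eq.mp h), ?_, ?_, ?_⟩
    · simpa [Ideal.Quotient.eq_zero_iff_mem] using h2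
    · simpa [Ideal.Quotient.eq_zero_iff_mem] using h3
    · rw [← _root_.map_mul, Ideal.Quotient.eq_zero_iff_mem]; exact h4
  · rintro ⟨h1, h2, h3, h4⟩
    refine ⟨fun h => h1 (by rw [h]), ?_, ?_, ?_⟩
    · simpa [Ideal.Quotient.eq_zero_iff_mem] using h2
    · simpa [Ideal.Quotient.eq_zero_iff_mem] using h3
    · rw [← _root_.map_mul, Ideal.Quotient.eq_zero_iff_mem] at h4; exact h4

theorem stmt5 {R : Type*} [CommRing R] [Nontrivial R] (I : Ideal R)
    (hrad : I.radical = I) (x y : R)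
    (hx : x ∈ idealVertexSet I) (hy : y ∈ idealVertexSet I) :
    Orth (idealGraph I) x y ↔
      Orth (zdGraph (R ⧸ I)) (Ideal.Quotient.mk I x) (Ideal.Quotient.mk I y) := by

  constructor
  · rintro ⟨hadj, horth⟩
    refine ⟨(adj_iff hrad x y).mp hadj, ?_⟩
    intro c
    obtain ⟨c, rfl⟩ := Ideal.Quotient.mk_surjective c
    rintro ⟨h1, h2⟩
    exact horth c ⟨(adj_iff hrad x c).mpr h1, (adj_iff hrad y c).mpr h2⟩
  · rintro ⟨hadj, horth⟩
    refine ⟨(adj_iff hrad x y).mpr hadj, ?_⟩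
    rintro c ⟨h1, h2⟩
    exact horth _ ⟨(adj_iff hrad x c).mp h1, (adj_iff hrad y c).mp h2⟩
end

section
/- Let R be a commutative ring with nonzero identity and I a radical ideal of R. Suppose Γ(R/I) is uniquely complemented, x ⊥ y and x ⊥ z in Γ_I(R), and α ∈ R \ I. Then αy ∈ I if and only if αz ∈ I. -/
open Ideal Polynomial

theorem stmt7 {R : Type*} [CommRing R] [Nontrivial R] (I : Ideal R)
    (hrad : I.radical = I)
    (huc : UniquelyComplemented (zdGraph (R ⧸ I)) (zdVertexSet (R ⧸ I)))
    (x y z α : R)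
    (hxy : Orth (idealGraph I) x y) (hxz : Orth (idealGraph I) x z)
    (hα : α ∉ I) :
    α * y ∈ I ↔ α * z ∈ I := by
  set f := Ideal.Quotient.mk I with hf
  -- R/I is reduced (I radical): squares in I imply membership
  have hsq : ∀ a : R, a * a ∈ I → a ∈ I := by
    intro a ha
    rw [← hrad]
    exact ⟨2, by rwa [pow_two]⟩
  have hne : ∀ a : R, a ∉ I → f a ≠ 0 := by
    intro a ha h
    exact ha ((Ideal.Quotient.eq_zero_iff_mem).mp h)
  -- transfer of orthogonality to the quotient zero-divisor graph
  have key : ∀ b : R, Orth (idealGraph I) x b →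
      Orth (zdGraph (R ⧸ I)) (f x) (f b) := by
    rintro b ⟨⟨hneq, hx, hb, hxb⟩, horth⟩
    constructor
    · refine ⟨?_, hne x hx, hne b hb, ?_⟩
      · intro h
        apply hx
        apply hsq
        have hxmb : x - b ∈ I := (Ideal.Quotient.eq).mp h
        have : x * x = x * (x - b) + x * b := by ring
        rw [this]
        exact I.add_mem (I.mul_mem_left x hxmb) hxb
      · rw [← _root_.map_mul, Ideal.Quotient.eq_zero_iff_mem]
        exact hxb
    · rintro c ⟨⟨hc1, hc2, hc3, hc4⟩, ⟨hd1, hd2, hd3, hd4⟩⟩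
      obtain ⟨c', rfl⟩ := Ideal.Quotient.mk_surjective c
      have hc'I : c' ∉ I := fun h => hc3 ((Ideal.Quotient.eq_zero_iff_mem).mpr h)
      apply horth c'
      refine ⟨⟨fun h => hc1 (by rw [h]), hx, hc'I, ?_⟩,
        ⟨fun h => hd1 (by rw [h]), hb, hc'I, ?_⟩⟩
      · rw [← Ideal.Quotient.eq_zero_iff_mem, _root_.map_mul]; exact hc4
      · rw [← Ideal.Quotient.eq_zero_iff_mem, _root_.map_mul]; exact hd4
  have hsim : Sim (zdGraph (R ⧸ I)) (f y) (f z) :=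
    huc.2 (f x) (f y) (f z) (key y hxy) (key z hxz)
  obtain ⟨⟨_, _, hy, _⟩, _⟩ := hxy
  obtain ⟨⟨_, _, hz, _⟩, _⟩ := hxz
  have dir : ∀ b c : R, b ∉ I → c ∉ I →
      (zdGraph (R ⧸ I)).Adj (f b) (f α) → ((zdGraph (R ⧸ I)).Adj (f b) (f α)
        ↔ (zdGraph (R ⧸ I)).Adj (f c) (f α)) → α * c ∈ I := by
    rintro b c hb hc hadj hiff
    obtain ⟨_, _, _, hprod⟩ := hiff.mp hadj
    rw [← _root_.map_mul, Ideal.Quotient.eq_zero_iff_mem] at hprod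
    rwa [mul_comm]
  have adj_of : ∀ b : R, b ∉ I → α * b ∈ I → (zdGraph (R ⧸ I)).Adj (f b) (f α) := by
    intro b hb hab
    refine ⟨?_, hne b hb, hne α hα, ?_⟩
    · intro h
      apply hb
      apply hsq
      have : f (b * b) = f (α * b) := by
        rw [_root_.map_mul, _root_.map_mul, ← h]
      rw [Ideal.Quotient.eq] at this
      have hbb : b * b - α * b + α * b ∈ I := I.add_mem this hab
      simpa using hbb
    · rw [← _root_.map_mul, Ideal.Quotient.eq_zero_iff_mem, mul_comm]
      exact hab
  constructor
  · intro h
    exact dir y z hy hz (adj_of y hy h) (hsim.2 (f α))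
  · intro h
    exact dir z y hz hy (adj_of z hz h) (hsim.2 (f α)).symm
end

section
/- Let R be a commutative ring with nonzero identity and I a radical ideal of R. Then Γ_I(R) is complemented if and only if Γ_I(R) is uniquely complemented. -/
open Ideal Polynomial

theorem stmt8 {R : Type*} [CommRing R] [Nontrivial R] (I : Ideal R)
    (hrad : I.radical = I) :
    Complemented (idealGraph I) (idealVertexSet I) ↔
      UniquelyComplemented (idealGraph I) (idealVertexSet I) := by
  constructor
  · intro hc
    refine ⟨hc, ?_⟩
    rintro a b c ⟨hab, hb⟩ ⟨hac, hc'⟩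
    obtain ⟨hne1, haI, hbI, habI⟩ := hab
    obtain ⟨hne2, -, hcI, hacI⟩ := hac
    have hred : ∀ x : R, x * x ∈ I → x ∈ I := by
      intro x hx
      rw [← hrad]
      exact ⟨2, by rwa [pow_two]⟩
    -- common annihilator lemmas
    have hannb : ∀ x : R, x * a ∈ I → x * b ∈ I → x ∈ I := by
      intro x hxa hxb
      by_contra hxI
      rcases eq_or_ne x a with rfl | hxna
      · exact hxI (hred x hxa)
      rcases eq_or_ne x b with rfl | hxnb
      · exact hxI (hred x hxb)
      exact hb x ⟨⟨hxna.symm, haI, hxI, by rwa [mul_comm]⟩,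
        ⟨hxnb.symm, hbI, hxI, by rwa [mul_comm]⟩⟩
    have hannc : ∀ x : R, x * a ∈ I → x * c ∈ I → x ∈ I := by
      intro x hxa hxc
      by_contra hxI
      rcases eq_or_ne x a with rfl | hxna
      · exact hxI (hred x hxa)
      rcases eq_or_ne x c with rfl | hxnc
      · exact hxI (hred x hxc)
      exact hc' x ⟨⟨hxna.symm, haI, hxI, by rwa [mul_comm]⟩,
        ⟨hxnc.symm, hcI, hxI, by rwa [mul_comm]⟩⟩
    -- ann(b) ⊆ ann(c) mod I and conversely
    have hbc : ∀ x : R, x * b ∈ I → x * c ∈ I := by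
      intro x hxb
      have h1 : (x * c) * a ∈ I := by
        have : x * (c * a) ∈ I := I.mul_mem_left x (by rwa [mul_comm])
        rwa [← mul_assoc] at this
      have h2 : (x * c) * b ∈ I := by
        have : (x * b) * c ∈ I := I.mul_mem_right c hxb
        have e : (x * c) * b = (x * b) * c := by ring
        rwa [e]
      exact hannb (x * c) h1 h2
    have hcb : ∀ x : R, x * c ∈ I → x * b ∈ I := by
      intro x hxc
      have h1 : (x * b) * a ∈ I := by
        have : x * (b * a) ∈ I := I.mul_mem_left x (by rwa [mul_comm])
        rwa [← mul_assoc] at this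
      have h2 : (x * b) * c ∈ I := by
        have : (x * c) * b ∈ I := I.mul_mem_right b hxc
        have e : (x * b) * c = (x * c) * b := by ring
        rwa [e]
      exact hannc (x * b) h1 h2
    -- b and c are not adjacent
    have hbcnI : b * c ∉ I := by
      intro h
      have : b * b ∈ I := hcb b h
      exact hbI (hred b this)
    constructor
    · rintro ⟨-, -, -, h⟩
      exact hbcnI h
    · intro x
      constructor
      · rintro ⟨hxb, -, hxI, hbx⟩
        refine ⟨?_, hcI, hxI, ?_⟩
        · rintro rfl
          exact hbcnI hbx
        · have := hbc x (by rwa [mul_comm])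
          rwa [mul_comm]
      · rintro ⟨hxc, -, hxI, hcx⟩
        refine ⟨?_, hbI, hxI, ?_⟩
        · rintro rfl
          exact hbcnI (by rwa [mul_comm] at hcx)
        · have := hcb x (by rwa [mul_comm])
          rwa [mul_comm]
  · exact fun h => h.1
end

section
/- Let R be a commutative ring with nonzero identity and I a proper nonzero non-prime ideal of R. Then Γ_I(R) is complemented if and only if exactly one of the following holds: (1) R/I ≅ ℤ₄ or R/I ≅ ℤ₂[X]/(X²), and |I| = 2; or (2) Γ(R/I) is complemented and I is a radical ideal of R. -/
open Ideal Polynomial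

namespace Stmt10Aux

lemma zmod4_ann : ∀ s : ZMod 4, s * 2 = 0 → s = 0 ∨ s = 2 := by decide

lemma zmod4_ne : (2 : ZMod 4) ≠ 0 := by decide
lemma zmod4_sq : (2 : ZMod 4) ^ 2 = 0 := by decide

noncomputable abbrev Q2 : Type := Polynomial (ZMod 2) ⧸ Ideal.span {(X : Polynomial (ZMod 2)) ^ 2}

noncomputable def tQ2 : Q2 := Ideal.Quotient.mk _ X

lemma q2_mem_iff (p : Polynomial (ZMod 2)) :
    Ideal.Quotient.mk (Ideal.span {(X : Polynomial (ZMod 2)) ^ 2}) p = 0 ↔ X ^ 2 ∣ p := by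
  rw [Ideal.Quotient.eq_zero_iff_mem, Ideal.mem_span_singleton]

lemma q2_t_ne : tQ2 ≠ 0 := by
  intro h
  rw [tQ2, q2_mem_iff] at h
  have := Polynomial.natDegree_le_of_dvd h Polynomial.X_ne_zero
  simp at this

lemma q2_t_sq : tQ2 ^ 2 = 0 := by
  rw [tQ2, ← map_pow, q2_mem_iff]

lemma q2_ann : ∀ s : Q2, s * tQ2 = 0 → s = 0 ∨ s = tQ2 := by
  intro s hs
  obtain ⟨p, rfl⟩ := Ideal.Quotient.mk_surjective s
  rw [tQ2, ← _root_.map_mul, q2_mem_iff] at hs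
  have hX : X ∣ p :=
    (mul_dvd_mul_iff_right (Polynomial.X_ne_zero (R := ZMod 2))).mp
      (by simpa [pow_two, mul_comm] using hs)
  obtain ⟨q, rfl⟩ := hX
  rcases (by decide : ∀ a : ZMod 2, a = 0 ∨ a = 1) (q.coeff 0) with h0 | h1
  · left
    rw [q2_mem_iff]
    obtain ⟨r, rfl⟩ := X_dvd_iff.mpr h0
    exact ⟨r, by ring⟩
  · right
    rw [tQ2, Ideal.Quotient.mk_eq_mk_iff_sub_mem, Ideal.mem_span_singleton]
    obtain ⟨r, hr⟩ := X_dvd_iff.mpr (show (q - 1).coeff 0 = 0 by simp [h1])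
    exact ⟨r, by rw [show q = 1 + X * r by linear_combination hr]; ring⟩

section classify
variable {S : Type*} [CommRing S] (t : S) (ht0 : t ≠ 0) (ht2 : t ^ 2 = 0)
  (hann : ∀ s : S, s * t = 0 → s = 0 ∨ s = t)

set_option linter.unusedSectionVars false

include ht0 ht2 hann

lemma enum : ∀ s : S, s = 0 ∨ s = t ∨ s = 1 ∨ s = 1 + t := by
  intro s
  rcases hann (s * t) (by rw [mul_assoc, ← pow_two, ht2, mul_zero]) with h | h
  · rcases hann s h with h' | h'
    · exact Or.inl h'
    · exact Or.inr (Or.inl h')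
  · have : (s - 1) * t = 0 := by rw [sub_mul, h, one_mul, sub_self]
    rcases hann _ this with h' | h'
    · exact Or.inr (Or.inr (Or.inl (by linear_combination h')))
    · exact Or.inr (Or.inr (Or.inr (by linear_combination h')))

lemma zd_unique : ∀ z w : S, z ≠ 0 → w ≠ 0 → z * w = 0 → z = t := by
  intro z w hz hw hzw
  rcases enum t ht0 ht2 hann z with h | h | h | h
  · exact absurd h hz
  · exact h
  · exact absurd (by rw [← one_mul w, ← h, hzw]) hw
  · exfalso
    apply hw
    have h1 : (1 - t) * (z * w) = 0 := by rw [hzw, mul_zero]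
    rw [h] at h1
    have h2 : (1 - t ^ 2) * w = 0 := by linear_combination h1
    rwa [ht2, sub_zero, one_mul] at h2

lemma two_cases : (2 : S) = 0 ∨ (2 : S) = t := by
  have h2t : (2 : S) * t = 0 := by
    rcases hann (t + t) (by rw [add_mul, ← pow_two, ht2, add_zero]) with h | h
    · rw [two_mul]; exact h
    · exact absurd (by linear_combination h) ht0
  exact hann 2 h2t

lemma caseA (h2 : (2 : S) = t) : Nonempty (S ≃+* ZMod 4) := by
  haveI : Nontrivial S := nontrivial_of_ne t 0 ht0
  have h4 : (4 : S) = 0 := by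
    have : (4 : S) = 2 * 2 := by norm_num
    rw [this, h2, ← pow_two, ht2]
  have hdvd : ringChar S ∣ 4 :=
    (CharP.cast_eq_zero_iff S (ringChar S) 4).mp (by exact_mod_cast h4)
  have hch := CharP.cast_eq_zero S (ringChar S)
  have hb := Nat.le_of_dvd (by norm_num) hdvd
  have hc : ringChar S = 4 := by
    interval_cases h : ringChar S
    · exact absurd hdvd (by norm_num)
    · exact absurd (by exact_mod_cast hch) (one_ne_zero (α := S))
    · exact absurd (by rw [show ((2:ℕ):S) = (2:S) by push_cast; ring, h2] at hch; exact hch) ht0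
    · exact absurd hdvd (by norm_num)
    · rfl
  haveI : CharP S 4 := ringChar.eq_iff.mp hc
  let f : ZMod 4 →+* S := ZMod.castHom dvd_rfl S
  have hinj : Function.Injective f := ZMod.castHom_injective S
  have hsurj : Function.Surjective f := by
    intro s
    rcases enum t ht0 ht2 hann s with h | h | h | h
    · exact ⟨0, by simp [f, h]⟩
    · exact ⟨2, by rw [map_ofNat f 2, h, ← h2]⟩
    · exact ⟨1, by simp [f, h]⟩
    · exact ⟨3, by rw [map_ofNat f 3, h, show (3:S) = 1 + 2 by norm_num, h2]⟩
  exact ⟨(RingEquiv.ofBijective f ⟨hinj, hsurj⟩).symm⟩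

lemma caseB (h2 : (2 : S) = 0) : Nonempty (S ≃+* Q2) := by
  haveI : Nontrivial S := nontrivial_of_ne t 0 ht0
  have hc : ringChar S = 2 := by
    have hdvd : ringChar S ∣ 2 :=
      (CharP.cast_eq_zero_iff S (ringChar S) 2).mp (by exact_mod_cast h2)
    have hch := CharP.cast_eq_zero S (ringChar S)
    have hb := Nat.le_of_dvd (by norm_num) hdvd
    interval_cases h : ringChar S
    · exact absurd hdvd (by norm_num)
    · exact absurd (by exact_mod_cast hch) (one_ne_zero (α := S))
    · rfl
  haveI : CharP S 2 := ringChar.eq_iff.mp hc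
  let f : ZMod 2 →+* S := ZMod.castHom dvd_rfl S
  let g : Polynomial (ZMod 2) →+* S := Polynomial.eval₂RingHom f t
  have hgX : g X = t := Polynomial.eval₂_X _ _
  have hval : ∀ p : Polynomial (ZMod 2), g p = f (p.coeff 0) + f (p.coeff 1) * t := by
    intro p
    conv_lhs => rw [← Polynomial.X_mul_divX_add p]
    rw [map_add, _root_.map_mul, hgX]
    conv_lhs => rw [← Polynomial.X_mul_divX_add p.divX]
    rw [map_add, _root_.map_mul, hgX, Polynomial.coeff_divX]
    have hC : ∀ a : ZMod 2, g (C a) = f a := fun a => Polynomial.eval₂_C _ _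
    rw [hC, hC]
    ring_nf
    rw [ht2]
    ring
  have hker : ∀ p ∈ Ideal.span {(X : Polynomial (ZMod 2)) ^ 2}, g p = 0 := by
    intro p hp
    rw [Ideal.mem_span_singleton] at hp
    obtain ⟨q, rfl⟩ := hp
    rw [_root_.map_mul, map_pow, hgX, ht2, zero_mul]
  let h : Q2 →+* S := Ideal.Quotient.lift _ g hker
  have hsurj : Function.Surjective h := by
    intro s
    rcases enum t ht0 ht2 hann s with hs | hs | hs | hs
    · exact ⟨0, by simp [hs]⟩
    · exact ⟨Ideal.Quotient.mk _ X, by simp [h, hgX, hs]⟩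
    · exact ⟨1, by simp [hs]⟩
    · exact ⟨Ideal.Quotient.mk _ (1 + X), by
        simp only [h, Ideal.Quotient.lift_mk, map_add, map_one, hgX, hs]⟩
  have hinj : Function.Injective h := by
    rw [injective_iff_map_eq_zero]
    intro a ha
    obtain ⟨p, rfl⟩ := Ideal.Quotient.mk_surjective a
    rw [show h (Ideal.Quotient.mk _ p) = g p from Ideal.Quotient.lift_mk _ _ _, hval] at ha
    have key : p.coeff 0 = 0 ∧ p.coeff 1 = 0 := by
      rcases (by decide : ∀ a : ZMod 2, a = 0 ∨ a = 1) (p.coeff 0) with h0 | h0 <;>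
      rcases (by decide : ∀ a : ZMod 2, a = 0 ∨ a = 1) (p.coeff 1) with h1 | h1
      · exact ⟨h0, h1⟩
      · exfalso
        rw [h0, h1, map_zero, map_one, zero_add, one_mul] at ha
        exact ht0 ha
      · exfalso
        rw [h0, h1, map_zero, map_one, zero_mul, add_zero] at ha
        exact one_ne_zero ha
      · exfalso
        rw [h0, h1, map_one, one_mul] at ha
        apply ht0
        have := congrArg (· * t) ha
        simpa only [add_mul, one_mul, ← pow_two, ht2, add_zero, zero_mul] using this
    rw [Ideal.Quotient.eq_zero_iff_mem, Ideal.mem_span_singleton]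
    obtain ⟨q, hq⟩ := Polynomial.X_dvd_iff.mpr key.1
    have hq1 : q.coeff 0 = 0 := by
      have h2' := key.2
      rw [hq] at h2'
      simpa [Polynomial.coeff_X_mul] using h2'
    obtain ⟨r, hr⟩ := Polynomial.X_dvd_iff.mpr hq1
    exact ⟨r, by rw [hq, hr]; ring⟩
  exact ⟨(RingEquiv.ofBijective h ⟨hinj, hsurj⟩).symm⟩

lemma classify : Nonempty (S ≃+* ZMod 4) ∨ Nonempty (S ≃+* Q2) := by
  rcases two_cases t ht0 ht2 hann with h | h
  · exact Or.inr (caseB t ht0 ht2 hann h)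
  · exact Or.inl (caseA t ht0 ht2 hann h)

end classify

lemma of_iso {S : Type*} [CommRing S]
    (h : Nonempty (S ≃+* ZMod 4) ∨ Nonempty (S ≃+* Q2)) :
    ∃ t : S, t ≠ 0 ∧ t ^ 2 = 0 ∧ ∀ s : S, s * t = 0 → s = 0 ∨ s = t := by
  rcases h with ⟨⟨e⟩⟩ | ⟨⟨e⟩⟩
  · refine ⟨e.symm 2, ?_, ?_, ?_⟩
    · intro h
      have := congrArg e h
      rw [RingEquiv.apply_symm_apply, map_zero] at this
      exact zmod4_ne this
    · have h1 : e (e.symm 2 ^ 2) = 0 := by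
        rw [map_pow, RingEquiv.apply_symm_apply, zmod4_sq]
      have h2 := congrArg e.symm h1
      rwa [RingEquiv.symm_apply_apply, map_zero] at h2
    · intro s hs
      have h1 : e s * 2 = 0 := by
        have := congrArg e hs
        rwa [_root_.map_mul, RingEquiv.apply_symm_apply, map_zero] at this
      rcases zmod4_ann (e s) h1 with h | h
      · left
        have := congrArg e.symm h
        rwa [RingEquiv.symm_apply_apply, map_zero] at this
      · right
        have := congrArg e.symm h
        rwa [RingEquiv.symm_apply_apply] at this
  · refine ⟨e.symm tQ2, ?_, ?_, ?_⟩
    · intro h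
      have := congrArg e h
      rw [RingEquiv.apply_symm_apply, map_zero] at this
      exact q2_t_ne this
    · have h1 : e (e.symm tQ2 ^ 2) = 0 := by
        rw [map_pow, RingEquiv.apply_symm_apply, q2_t_sq]
      have h2 := congrArg e.symm h1
      rwa [RingEquiv.symm_apply_apply, map_zero] at h2
    · intro s hs
      have h1 : e s * tQ2 = 0 := by
        have := congrArg e hs
        rwa [_root_.map_mul, RingEquiv.apply_symm_apply, map_zero] at this
      rcases q2_ann (e s) h1 with h | h
      · left
        have := congrArg e.symm h
        rwa [RingEquiv.symm_apply_apply, map_zero] at this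
      · right
        have := congrArg e.symm h
        rwa [RingEquiv.symm_apply_apply] at this

end Stmt10Aux

theorem stmt10 {R : Type*} [CommRing R] [Nontrivial R] (I : Ideal R)
    (hI : I ≠ ⊤) (hI0 : I ≠ ⊥) (hIp : ¬ I.IsPrime) :
    Complemented (idealGraph I) (idealVertexSet I) ↔
      Xor'
        ((Nonempty ((R ⧸ I) ≃+* ZMod 4) ∨
            Nonempty ((R ⧸ I) ≃+*
              (Polynomial (ZMod 2) ⧸ Ideal.span {(X : Polynomial (ZMod 2)) ^ 2}))) ∧
          Nat.card I = 2)
        (Complemented (zdGraph (R ⧸ I)) (zdVertexSet (R ⧸ I)) ∧ I.radical = I) := by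
  classical
  set mkq := Ideal.Quotient.mk I with hmkq
  have hnil_of_case1 :
      (Nonempty ((R ⧸ I) ≃+* ZMod 4) ∨
        Nonempty ((R ⧸ I) ≃+*
          (Polynomial (ZMod 2) ⧸ Ideal.span {(X : Polynomial (ZMod 2)) ^ 2}))) →
      ∃ x, x ∉ I ∧ x ^ 2 ∈ I := by
    intro h
    obtain ⟨t, ht0, ht2, -⟩ := Stmt10Aux.of_iso h
    obtain ⟨x, rfl⟩ := Ideal.Quotient.mk_surjective t
    refine ⟨x, fun hx => ht0 (Ideal.Quotient.eq_zero_iff_mem.mpr hx), ?_⟩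
    rw [← Ideal.Quotient.eq_zero_iff_mem, map_pow]
    exact ht2
  constructor
  · -- forward direction
    intro hcomp
    by_cases hrad : I.radical = I
    · -- radical case: Γ(R/I) is complemented
      refine Or.inr ⟨⟨?_, hrad⟩, ?_⟩
      · intro a ha
        obtain ⟨ha0, w, hw0, haw⟩ := ha
        obtain ⟨x, rfl⟩ := Ideal.Quotient.mk_surjective a
        obtain ⟨y, rfl⟩ := Ideal.Quotient.mk_surjective w
        have hxI : x ∉ I := fun h => ha0 (Ideal.Quotient.eq_zero_iff_mem.mpr h)
        have hyI : y ∉ I := fun h => hw0 (Ideal.Quotient.eq_zero_iff_mem.mpr h)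
        have hxy : x * y ∈ I := by
          rw [← Ideal.Quotient.eq_zero_iff_mem, _root_.map_mul]; exact haw
        obtain ⟨b, hbS, ⟨hbx, -, hbI, hxb⟩, hnc⟩ := hcomp x ⟨hxI, y, hyI, hxy⟩
        have hsq : ∀ z : R, z ∉ I → z * z ∈ I → False := fun z hz h2 =>
          hz (hrad ▸ Ideal.mem_radical_iff.mpr ⟨2, by rwa [pow_two]⟩)
        have hmkne : mkq x ≠ mkq b := by
          intro h
          rw [hmkq, Ideal.Quotient.mk_eq_mk_iff_sub_mem] at h
          apply hsq x hxI
          have hxx : x * x = x * b + x * (x - b) := by ring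
          rw [hxx]
          exact I.add_mem hxb (I.mul_mem_left x h)
        refine ⟨mkq b, ⟨fun h => hbI (Ideal.Quotient.eq_zero_iff_mem.mp h),
            mkq x, fun h => hxI (Ideal.Quotient.eq_zero_iff_mem.mp h),
            by rw [← _root_.map_mul, mul_comm]; exact Ideal.Quotient.eq_zero_iff_mem.mpr hxb⟩,
          ⟨hmkne, fun h => hxI (Ideal.Quotient.eq_zero_iff_mem.mp h),
            fun h => hbI (Ideal.Quotient.eq_zero_iff_mem.mp h),
            by rw [← _root_.map_mul]; exact Ideal.Quotient.eq_zero_iff_mem.mpr hxb⟩, ?_⟩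
        rintro c ⟨⟨hcx, -, hc0, hxc⟩, ⟨hcb, -, -, hbc⟩⟩
        obtain ⟨z, rfl⟩ := Ideal.Quotient.mk_surjective c
        have hzI : z ∉ I := fun h => hc0 (Ideal.Quotient.eq_zero_iff_mem.mpr h)
        refine hnc z ⟨⟨fun h => hcx (by rw [h]), hxI, hzI, ?_⟩,
          ⟨fun h => hcb (by rw [h]), hbI, hzI, ?_⟩⟩
        · rw [← Ideal.Quotient.eq_zero_iff_mem, _root_.map_mul]; exact hxc
        · rw [← Ideal.Quotient.eq_zero_iff_mem, _root_.map_mul]; exact hbc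
      · rintro ⟨hiso, -⟩
        obtain ⟨x, hxI, hx2⟩ := hnil_of_case1 hiso
        exact hxI (hrad ▸ Ideal.mem_radical_iff.mpr ⟨2, hx2⟩)
    · -- non-radical case
      left
      obtain ⟨x, hxI, hx2⟩ : ∃ x, x ∉ I ∧ x ^ 2 ∈ I := by
        have hle : I ≤ I.radical := Ideal.le_radical
        obtain ⟨x, hxr, hxI⟩ : ∃ x, x ∈ I.radical ∧ x ∉ I := by
          by_contra hc
          push_neg at hc
          exact hrad (le_antisymm (fun x hx => hc x hx) hle)
        obtain ⟨n, hn⟩ := Ideal.mem_radical_iff.mp hxr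
        have hP : ∃ m, x ^ m ∈ I := ⟨n, hn⟩
        have hm : x ^ Nat.find hP ∈ I := Nat.find_spec hP
        have hm0 : Nat.find hP ≠ 0 := by
          intro h
          rw [h, pow_zero] at hm
          exact hI ((Ideal.eq_top_iff_one I).mpr hm)
        have hm1 : Nat.find hP ≠ 1 := by
          intro h
          rw [h, pow_one] at hm
          exact hxI hm
        have hm2 : 2 ≤ Nat.find hP := by omega
        refine ⟨x ^ (Nat.find hP - 1), Nat.find_min hP (by omega), ?_⟩
        rw [← pow_mul]
        rw [show (Nat.find hP - 1) * 2 = Nat.find hP + (Nat.find hP - 2) by omega, pow_add]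
        exact I.mul_mem_right _ hm
      have hxv : x ∈ idealVertexSet I := ⟨hxI, x, hxI, by rwa [← pow_two]⟩
      obtain ⟨b, -, ⟨hbx, -, hbI, hxb⟩, hnc⟩ := hcomp x hxv
      have hadj_xi : ∀ i ∈ I, i ≠ 0 → (idealGraph I).Adj x (x + i) := by
        intro i hi hi0
        refine ⟨fun h => hi0 (left_eq_add.mp h), hxI,
          fun h => hxI (by simpa using I.sub_mem h hi), ?_⟩
        rw [mul_add]
        exact I.add_mem (by rwa [← pow_two]) (I.mul_mem_left x hi)
      have hbxI : b - x ∈ I := by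
        by_contra hbnot
        obtain ⟨i, hi, hi0⟩ := Submodule.exists_mem_ne_zero_of_ne_bot hI0
        refine hnc (x + i) ⟨hadj_xi i hi hi0, ?_, hbI, (hadj_xi i hi hi0).2.2.1, ?_⟩
        · intro h
          apply hbnot
          rw [h]
          simpa using hi
        · rw [mul_add]
          exact I.add_mem (by rwa [mul_comm] at hxb) (I.mul_mem_left b hi)
      set i₀ := b - x with hi₀def
      have hi₀0 : i₀ ≠ 0 := sub_ne_zero.mpr (Ne.symm hbx)
      have hbeq : b = x + i₀ := by rw [hi₀def]; ring
      have hIonly : ∀ j ∈ I, j = 0 ∨ j = i₀ := by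
        intro j hj
        by_contra hc
        push_neg at hc
        refine hnc (x + j) ⟨hadj_xi j hj hc.1, ?_, hbI, (hadj_xi j hj hc.1).2.2.1, ?_⟩
        · intro h
          apply hc.2
          rw [hbeq] at h
          exact (add_right_injective x h).symm
        · rw [mul_add]
          exact I.add_mem (by rwa [mul_comm] at hxb) (I.mul_mem_left b hj)
      have hann : ∀ s : R ⧸ I, s * mkq x = 0 → s = 0 ∨ s = mkq x := by
        intro s hs
        obtain ⟨c, rfl⟩ := Ideal.Quotient.mk_surjective s
        by_cases hcI : c ∈ I
        · exact Or.inl (Ideal.Quotient.eq_zero_iff_mem.mpr hcI)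
        by_cases hcx : c - x ∈ I
        · exact Or.inr ((Ideal.Quotient.mk_eq_mk_iff_sub_mem c x).mpr hcx)
        exfalso
        have hcxI : c * x ∈ I := by
          rw [← Ideal.Quotient.eq_zero_iff_mem, _root_.map_mul]; exact hs
        refine hnc c ⟨⟨?_, hxI, hcI, by rwa [mul_comm] at hcxI⟩, ?_, hbI, hcI, ?_⟩
        · intro h
          exact hcx (by rw [← h]; simpa using I.zero_mem)
        · intro h
          apply hcx
          rw [← h, hbeq]
          simpa using hbxI
        · rw [hbeq, add_mul]
          exact I.add_mem (by rwa [mul_comm] at hcxI) (I.mul_mem_right c hbxI)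
      have ht0 : mkq x ≠ 0 := fun h => hxI (Ideal.Quotient.eq_zero_iff_mem.mp h)
      have ht2 : mkq x ^ 2 = 0 := by
        rw [hmkq, ← map_pow]
        exact Ideal.Quotient.eq_zero_iff_mem.mpr hx2
      refine ⟨⟨Stmt10Aux.classify (mkq x) ht0 ht2 hann, ?_⟩, fun h => hrad h.2⟩
      rw [Nat.card_eq_two_iff]
      refine ⟨⟨0, I.zero_mem⟩, ⟨i₀, hbxI⟩, ?_, ?_⟩
      · intro h
        exact hi₀0 (congrArg Subtype.val h).symm
      · ext ⟨j, hj⟩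
        simp only [Set.mem_insert_iff, Set.mem_singleton_iff, Set.mem_univ, iff_true]
        rcases hIonly j hj with h | h
        · exact Or.inl (Subtype.ext h)
        · exact Or.inr (Subtype.ext h)
  · -- reverse direction
    intro hxor
    rcases hxor with ⟨⟨hiso, hcard⟩, -⟩ | ⟨⟨hzd, hrad⟩, -⟩
    · -- case 1
      obtain ⟨t, ht0, ht2, hann⟩ := Stmt10Aux.of_iso hiso
      obtain ⟨i₀, hi₀I, hi₀0, honly⟩ :
          ∃ i₀, i₀ ∈ I ∧ i₀ ≠ 0 ∧ ∀ j ∈ I, j = 0 ∨ j = i₀ := by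
        obtain ⟨a, b', hab, huniv⟩ := Nat.card_eq_two_iff.mp hcard
        have h0mem : (⟨0, I.zero_mem⟩ : I) ∈ ({a, b'} : Set I) := by
          rw [huniv]; trivial
        have hmem : ∀ j (hj : j ∈ I), (⟨j, hj⟩ : I) ∈ ({a, b'} : Set I) := by
          intro j hj; rw [huniv]; trivial
        rcases h0mem with h0 | h0
        · refine ⟨b'.1, b'.2, ?_, ?_⟩
          · intro hb0
            exact hab (by rw [← h0]; exact Subtype.ext hb0.symm)
          · intro j hj
            rcases hmem j hj with h | h
            · exact Or.inl (by rw [← h0] at h; exact congrArg Subtype.val h)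
            · exact Or.inr (congrArg Subtype.val h)
        · refine ⟨a.1, a.2, ?_, ?_⟩
          · intro ha0
            exact hab (by rw [← h0]; exact Subtype.ext ha0)
          · intro j hj
            rcases hmem j hj with h | h
            · exact Or.inr (congrArg Subtype.val h)
            · exact Or.inl (by rw [← h0] at h; exact congrArg Subtype.val h)
      intro x hx
      obtain ⟨hxI, y, hyI, hxy⟩ := hx
      have hmx : mkq x = t := by
        refine Stmt10Aux.zd_unique t ht0 ht2 hann (mkq x) (mkq y)
          (fun h => hxI (Ideal.Quotient.eq_zero_iff_mem.mp h))
          (fun h => hyI (Ideal.Quotient.eq_zero_iff_mem.mp h)) ?_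
        rw [← _root_.map_mul]
        exact Ideal.Quotient.eq_zero_iff_mem.mpr hxy
      have hx2 : x ^ 2 ∈ I := by
        rw [← Ideal.Quotient.eq_zero_iff_mem, map_pow]
        rw [show Ideal.Quotient.mk I x = mkq x from rfl, hmx]
        exact ht2
      have hxi₀I : x + i₀ ∉ I := fun h => hxI (by simpa using I.sub_mem h hi₀I)
      have hadjb : (idealGraph I).Adj x (x + i₀) := by
        refine ⟨fun h => hi₀0 (left_eq_add.mp h), hxI, hxi₀I, ?_⟩
        rw [mul_add]
        exact I.add_mem (by rwa [← pow_two]) (I.mul_mem_left x hi₀I)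
      refine ⟨x + i₀, ⟨hxi₀I, x, hxI, by
          rw [add_mul]
          exact I.add_mem (by rwa [← pow_two]) (I.mul_mem_right x hi₀I)⟩,
        hadjb, ?_⟩
      rintro c ⟨⟨hcx, -, hcI, hxc⟩, ⟨hcb, -, -, hbc⟩⟩
      have hct : mkq c * t = 0 := by
        rw [← hmx, ← _root_.map_mul, mul_comm]
        exact Ideal.Quotient.eq_zero_iff_mem.mpr hxc
      rcases hann _ hct with h | h
      · exact hcI (Ideal.Quotient.eq_zero_iff_mem.mp h)
      · rw [← hmx, hmkq, Ideal.Quotient.mk_eq_mk_iff_sub_mem] at h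
        rcases honly _ h with h' | h'
        · exact hcx (by rw [sub_eq_zero] at h'; exact h'.symm)
        · apply hcb
          rw [← h']
          ring
    · -- case 2: radical
      intro x hx
      obtain ⟨hxI, y, hyI, hxy⟩ := hx
      have hmxv : mkq x ∈ zdVertexSet (R ⧸ I) := by
        refine ⟨fun h => hxI (Ideal.Quotient.eq_zero_iff_mem.mp h), mkq y,
          fun h => hyI (Ideal.Quotient.eq_zero_iff_mem.mp h), ?_⟩
        rw [← _root_.map_mul]
        exact Ideal.Quotient.eq_zero_iff_mem.mpr hxy
      obtain ⟨w, hwS, ⟨hwne, -, hw0, hxw⟩, hnc⟩ := hzd (mkq x) hmxv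
      obtain ⟨b, rfl⟩ := Ideal.Quotient.mk_surjective w
      have hbI : b ∉ I := fun h => hw0 (Ideal.Quotient.eq_zero_iff_mem.mpr h)
      have hxbI : x * b ∈ I := by
        rw [← Ideal.Quotient.eq_zero_iff_mem, _root_.map_mul]
        exact hxw
      have hsq : ∀ z : R, z ∉ I → z * z ∈ I → False := fun z hz h2 =>
        hz (hrad ▸ Ideal.mem_radical_iff.mpr ⟨2, by rwa [pow_two]⟩)
      refine ⟨b, ⟨hbI, x, hxI, by rwa [mul_comm]⟩,
        ⟨fun h => hwne (by rw [h]), hxI, hbI, hxbI⟩, ?_⟩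
      rintro c ⟨⟨hcx, -, hcI, hxc⟩, ⟨hcb, -, -, hbc⟩⟩
      refine hnc (mkq c)
        ⟨⟨?_, fun h => hxI (Ideal.Quotient.eq_zero_iff_mem.mp h),
          fun h => hcI (Ideal.Quotient.eq_zero_iff_mem.mp h),
          by rw [← _root_.map_mul]; exact Ideal.Quotient.eq_zero_iff_mem.mpr hxc⟩,
        ⟨?_, fun h => hbI (Ideal.Quotient.eq_zero_iff_mem.mp h),
          fun h => hcI (Ideal.Quotient.eq_zero_iff_mem.mp h),
          by rw [← _root_.map_mul]; exact Ideal.Quotient.eq_zero_iff_mem.mpr hbc⟩⟩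
      · intro h
        rw [hmkq, Ideal.Quotient.mk_eq_mk_iff_sub_mem] at h
        apply hsq x hxI
        have hxx : x * x = x * c + x * (x - c) := by ring
        rw [hxx]
        exact I.add_mem hxc (I.mul_mem_left x h)
      · intro h
        rw [hmkq, Ideal.Quotient.mk_eq_mk_iff_sub_mem] at h
        apply hsq b hbI
        have hbb : b * b = b * c + b * (b - c) := by ring
        rw [hbb]
        exact I.add_mem hbc (I.mul_mem_left b h)
end

section
/- Let R be a commutative ring with nonzero identity and I a proper radical ideal of R. Then Γ_I(R) is complemented if and only if Γ(R/I) is complemented. -/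
open Ideal Polynomial

theorem stmt11 {R : Type*} [CommRing R] [Nontrivial R] (I : Ideal R)
    (hI : I ≠ ⊤) (hrad : I.radical = I) :
    Complemented (idealGraph I) (idealVertexSet I) ↔
      Complemented (zdGraph (R ⧸ I)) (zdVertexSet (R ⧸ I)) := by

  set f := Ideal.Quotient.mk I with hf
  have hmem : ∀ x : R, f x = 0 ↔ x ∈ I := fun x => Ideal.Quotient.eq_zero_iff_mem
  have hsq : ∀ x : R, x * x ∈ I → x ∈ I := by
    intro x hx
    rw [← hrad]
    exact ⟨2, by rwa [pow_two]⟩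
  have hadj : ∀ x y : R, (idealGraph I).Adj x y ↔ (zdGraph (R ⧸ I)).Adj (f x) (f y) := by
    intro x y
    constructor
    · rintro ⟨hne, hx, hy, hxy⟩
      have h0 : f x * f y = 0 := by rw [← _root_.map_mul]; exact (hmem _).2 hxy
      refine ⟨?_, fun h => hx ((hmem x).1 h), fun h => hy ((hmem y).1 h), h0⟩
      intro heq
      exact hx (hsq x ((hmem _).1 (by rw [_root_.map_mul, heq, ← h0, heq])))
    · rintro ⟨hne, hx, hy, hxy⟩
      refine ⟨fun h => hne (by rw [h]), fun h => hx ((hmem x).2 h),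
        fun h => hy ((hmem y).2 h), (hmem _).1 (by rwa [_root_.map_mul])⟩
  have hvert : ∀ x : R, x ∈ idealVertexSet I ↔ f x ∈ zdVertexSet (R ⧸ I) := by
    intro x
    constructor
    · rintro ⟨hx, y, hy, hxy⟩
      exact ⟨fun h => hx ((hmem x).1 h), f y, fun h => hy ((hmem y).1 h),
        (by rw [← _root_.map_mul]; exact (hmem _).2 hxy)⟩
    · rintro ⟨hx, yb, hy, hxy⟩
      obtain ⟨y, rfl⟩ := Ideal.Quotient.mk_surjective yb
      exact ⟨fun h => hx ((hmem x).2 h), y, fun h => hy ((hmem y).2 h),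
        (hmem _).1 (by rwa [_root_.map_mul])⟩
  constructor
  · intro H ab hab
    obtain ⟨a, rfl⟩ := Ideal.Quotient.mk_surjective ab
    obtain ⟨b, hbv, hadj', horth⟩ := H a ((hvert a).2 hab)
    refine ⟨f b, (hvert b).1 hbv, (hadj a b).1 hadj', ?_⟩
    intro cb ⟨h1, h2⟩
    obtain ⟨c, rfl⟩ := Ideal.Quotient.mk_surjective cb
    exact horth c ⟨(hadj a c).2 h1, (hadj b c).2 h2⟩
  · intro H a hav
    obtain ⟨bb, hbv, hadj', horth⟩ := H (f a) ((hvert a).1 hav)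
    obtain ⟨b, rfl⟩ := Ideal.Quotient.mk_surjective bb
    refine ⟨b, (hvert b).2 hbv, (hadj a b).2 hadj', ?_⟩
    intro c ⟨h1, h2⟩
    exact horth (f c) ⟨(hadj a c).1 h1, (hadj b c).1 h2⟩
end

section
/- Let R be a commutative ring with nonzero identity and I a proper radical ideal of R. Then Γ_I(R) is complemented if and only if the total quotient ring T(R/I) is von Neumann regular. -/
open Ideal Polynomial

section Aux
variable {S : Type*} [CommRing S] [IsReduced S]

lemma key_exists (h : Complemented (zdGraph S) (zdVertexSet S)) (a : S) :
    ∃ b, a * b = 0 ∧ a + b ∈ nonZeroDivisors S := by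
  by_cases ha0 : a = 0
  · exact ⟨1, by simp [ha0], by simpa [ha0] using one_mem (nonZeroDivisors S)⟩
  by_cases hnz : a ∈ nonZeroDivisors S
  · exact ⟨0, by simp, by simpa using hnz⟩
  · -- a is a nonzero zero divisor
    obtain ⟨c, hc1, hc0⟩ : ∃ c, a * c = 0 ∧ c ≠ 0 := by
      simp only [mem_nonZeroDivisors_iff, not_and_or, not_forall] at hnz
      rcases hnz with ⟨c, hc, hc0⟩ | ⟨c, hc, hc0⟩
      · exact ⟨c, hc, hc0⟩
      · exact ⟨c, by rwa [mul_comm], hc0⟩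
    obtain ⟨b, _, hadj, horth⟩ := h a ⟨ha0, c, hc0, hc1⟩
    obtain ⟨hab, -, hb0, habz⟩ := hadj
    refine ⟨b, habz, mem_nonZeroDivisors_iff_right.mpr fun z hz => ?_⟩
    -- z * (a+b) = 0 → z = 0
    have hza : z * a = 0 := by
      have h1 : z * a * a = 0 := by
        have h2 : z * (a + b) * a = 0 := by rw [hz, zero_mul]
        calc z * a * a = z * (a+b) * a - z * (b * a) := by ring
          _ = 0 - z * (b * a) := by rw [h2]
          _ = 0 := by rw [mul_comm b a, habz, mul_zero, sub_zero]
      have hsq : (z * a) ^ 2 = 0 := by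
        have : (z * a) ^ 2 = z * (z * a * a) := by ring
        rw [this, h1, mul_zero]
      exact IsNilpotent.eq_zero ⟨2, hsq⟩
    have hzb : z * b = 0 := by
      have h3 := hz
      rw [mul_add, hza, zero_add] at h3
      exact h3
    by_contra hz0
    have hza' : a ≠ z := by
      rintro rfl
      exact ha0 (IsNilpotent.eq_zero ⟨2, by rw [sq, mul_comm]; exact hza⟩)
    have hzb' : b ≠ z := by
      rintro rfl
      exact hb0 (IsNilpotent.eq_zero ⟨2, by rw [sq, mul_comm]; exact hzb⟩)
    exact horth z ⟨⟨hza', ha0, hz0, by rwa [mul_comm]⟩,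
      ⟨hzb', hb0, hz0, by rwa [mul_comm]⟩⟩

lemma vnr_of_zd_complemented (h : Complemented (zdGraph S) (zdVertexSet S)) :
    ∀ x : Localization (nonZeroDivisors S), ∃ y, x = x * y * x := by
  intro x
  set f := algebraMap S (Localization (nonZeroDivisors S)) with hf
  obtain ⟨⟨a, s⟩, hx⟩ := IsLocalization.surj (nonZeroDivisors S) x
  obtain ⟨b, hab, hu⟩ := key_exists h a
  obtain ⟨v, hv⟩ := (IsLocalization.map_units (Localization (nonZeroDivisors S)) ⟨a + b, hu⟩).exists_right_inv
  have hs : IsUnit (f (s : S)) := IsLocalization.map_units (Localization (nonZeroDivisors S)) s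
  have hxb : x * f b = 0 := by
    have h1 : x * f b * f (s : S) = 0 := by
      have h2 : x * f (s : S) * f b = f (a * b) := by rw [hx, _root_.map_mul]
      rw [hab, _root_.map_zero] at h2
      calc x * f b * f (s:S) = x * f (s:S) * f b := by ring
        _ = 0 := h2
    rcases hs.exists_right_inv with ⟨w, hw⟩
    calc x * f b = x * f b * (f (s:S) * w) := by rw [hw, mul_one]
      _ = x * f b * f (s:S) * w := by ring
      _ = 0 := by rw [h1, zero_mul]
  have hxa : x * f (a + b) = x * f a := by
    rw [_root_.map_add, mul_add, hxb, add_zero]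
  refine ⟨f (s : S) * v, ?_⟩
  calc x = x * (f (a + b) * v) := by
        have : (f (a+b)) * v = 1 := hv
        rw [this, mul_one]
    _ = x * f (a + b) * v := by ring
    _ = x * f a * v := by rw [hxa]
    _ = x * (f (s:S) * v) * x := by rw [← hx]; ring

lemma zd_complemented_of_vnr
    (hvnr : ∀ x : Localization (nonZeroDivisors S), ∃ y, x = x * y * x) :
    Complemented (zdGraph S) (zdVertexSet S) := by
  rintro a ⟨ha0, c, hc0, hac⟩
  set f := algebraMap S (Localization (nonZeroDivisors S)) with hf
  have hinj : Function.Injective f := IsLocalization.injective (Localization (nonZeroDivisors S)) (le_refl (nonZeroDivisors S))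
  obtain ⟨t, ht⟩ := hvnr (f a)
  obtain ⟨⟨b, s⟩, hbs⟩ := IsLocalization.surj (nonZeroDivisors S) (1 - f a * t)
  have hsu : IsUnit (f (s : S)) := IsLocalization.map_units (Localization (nonZeroDivisors S)) s
  -- a * b = 0
  have hab : a * b = 0 := by
    apply hinj
    rw [_root_.map_mul, _root_.map_zero, ← hbs]
    calc f a * ((1 - f a * t) * f (s:S)) = (f a - f a * t * f a) * f (s:S) := by ring
      _ = 0 := by rw [← ht, sub_self, zero_mul]
  -- f a is not a unit-ish : f c ≠ 0 and f a * f c = 0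
  have hfc : f c ≠ 0 := fun hh => hc0 (hinj (by rw [hh, _root_.map_zero]))
  have hfac : f a * f c = 0 := by rw [← _root_.map_mul, hac, _root_.map_zero]
  -- b ≠ 0
  have hb0 : b ≠ 0 := by
    rintro rfl
    rw [_root_.map_zero] at hbs
    rcases hsu.exists_right_inv with ⟨w, hw⟩
    have h1 : (1 : Localization (nonZeroDivisors S)) - f a * t = 0 := by
      calc (1:Localization (nonZeroDivisors S)) - f a * t = (1 - f a * t) * f (s:S) * w := by rw [mul_assoc, hw, mul_one]
        _ = 0 := by rw [hbs, zero_mul]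
    have h2 : f a * t = 1 := by linear_combination -h1
    have : f c = 0 := by
      calc f c = f a * t * f c := by rw [h2, one_mul]
        _ = f a * f c * t := by ring
        _ = 0 := by rw [hfac, zero_mul]
    exact hfc this
  have hab' : a ≠ b := by
    rintro rfl
    exact ha0 (IsNilpotent.eq_zero ⟨2, by rw [sq]; exact hab⟩)
  refine ⟨b, ⟨hb0, a, ha0, by rwa [mul_comm]⟩, ⟨hab', ha0, hb0, hab⟩, ?_⟩
  rintro z ⟨⟨-, -, hz0, haz⟩, ⟨-, -, -, hbz⟩⟩
  -- z * a = 0, z * b = 0 → z = 0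
  have hfz : f z ≠ 0 := fun hh => hz0 (hinj (by rw [hh, _root_.map_zero]))
  have h1 : f z * (1 - f a * t) * f (s:S) = 0 := by
    rw [mul_assoc, hbs, ← _root_.map_mul, mul_comm z b, hbz, _root_.map_zero]
  rcases hsu.exists_right_inv with ⟨w, hw⟩
  have h2 : f z * (1 - f a * t) = 0 := by
    calc f z * (1 - f a * t) = f z * (1 - f a * t) * f (s:S) * w := by rw [mul_assoc, hw, mul_one]
      _ = 0 := by rw [h1, zero_mul]
  have h3 : f z = f z * f a * t := by linear_combination h2
  have h4 : f z * f a = 0 := by rw [← _root_.map_mul, mul_comm z a, haz, _root_.map_zero]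
  exact hfz (by rw [h3, h4, zero_mul])

end Aux

theorem stmt12 {R : Type*} [CommRing R] [Nontrivial R] (I : Ideal R)
    (hI : I ≠ ⊤) (hrad : I.radical = I) :
    Complemented (idealGraph I) (idealVertexSet I) ↔
      ∀ x : Localization (nonZeroDivisors (R ⧸ I)), ∃ y, x = x * y * x := by
  have hred : IsReduced (R ⧸ I) :=
    (Ideal.isRadical_iff_quotient_reduced I).mp (hrad ▸ Ideal.radical_isRadical I)
  set π := Ideal.Quotient.mk I with hπ
  have hmem : ∀ x : R, π x = 0 ↔ x ∈ I := fun x => Ideal.Quotient.eq_zero_iff_mem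
  have hsurj : Function.Surjective π := Ideal.Quotient.mk_surjective
  constructor
  · intro hcomp
    apply vnr_of_zd_complemented
    rintro abar ⟨ha0, cbar, hc0, hac⟩
    obtain ⟨a, rfl⟩ := hsurj abar
    obtain ⟨c, rfl⟩ := hsurj cbar
    have haI : a ∉ I := fun h => ha0 ((hmem a).mpr h)
    have hcI : c ∉ I := fun h => hc0 ((hmem c).mpr h)
    have hacI : a * c ∈ I := (hmem _).mp (by rw [_root_.map_mul]; exact hac)
    obtain ⟨b, ⟨hbI, _⟩, ⟨hab, -, -, habI⟩, horth⟩ := hcomp a ⟨haI, c, hcI, hacI⟩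
    have hb0 : π b ≠ 0 := fun h => hbI ((hmem b).mp h)
    have habz : π a * π b = 0 := by rw [← _root_.map_mul]; exact (hmem _).mpr habI
    have hab' : π a ≠ π b := by
      intro h
      apply ha0
      apply IsNilpotent.eq_zero (x := π a) ⟨2, _⟩
      rw [sq, h]; exact h ▸ habz
    refine ⟨π b, ⟨hb0, π a, ha0, by rwa [mul_comm]⟩, ⟨hab', ha0, hb0, habz⟩, ?_⟩
    rintro zbar ⟨⟨haz', -, hz0, hazz⟩, ⟨hbz', -, -, hbzz⟩⟩
    obtain ⟨z, rfl⟩ := hsurj zbar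
    have hzI : z ∉ I := fun h => hz0 ((hmem z).mpr h)
    have hazI : a * z ∈ I := (hmem _).mp (by rw [_root_.map_mul]; exact hazz)
    have hbzI : b * z ∈ I := (hmem _).mp (by rw [_root_.map_mul]; exact hbzz)
    exact horth z ⟨⟨fun h => haz' (by rw [h]), haI, hzI, hazI⟩,
      ⟨fun h => hbz' (by rw [h]), hbI, hzI, hbzI⟩⟩
  · intro hvnr
    have hcomp := zd_complemented_of_vnr hvnr
    rintro a ⟨haI, c, hcI, hacI⟩
    have ha0 : π a ≠ 0 := fun h => haI ((hmem a).mp h)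
    have hc0 : π c ≠ 0 := fun h => hcI ((hmem c).mp h)
    have hac : π a * π c = 0 := by rw [← _root_.map_mul]; exact (hmem _).mpr hacI
    obtain ⟨bbar, ⟨hb0, _⟩, ⟨hab, -, -, habz⟩, horth⟩ := hcomp (π a) ⟨ha0, π c, hc0, hac⟩
    obtain ⟨b, rfl⟩ := hsurj bbar
    have hbI : b ∉ I := fun h => hb0 ((hmem b).mpr h)
    have habI : a * b ∈ I := (hmem _).mp (by rw [_root_.map_mul]; exact habz)
    have hab' : a ≠ b := fun h => hab (by rw [h])
    refine ⟨b, ⟨hbI, a, haI, by rwa [mul_comm]⟩, ⟨hab', haI, hbI, habI⟩, ?_⟩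
    rintro z ⟨⟨-, -, hzI, hazI⟩, ⟨-, -, -, hbzI⟩⟩
    have hz0 : π z ≠ 0 := fun h => hzI ((hmem z).mp h)
    have hazz : π a * π z = 0 := by rw [← _root_.map_mul]; exact (hmem _).mpr hazI
    have hbzz : π b * π z = 0 := by rw [← _root_.map_mul]; exact (hmem _).mpr hbzI
    have haz' : π a ≠ π z := by
      intro h
      exact ha0 (IsNilpotent.eq_zero (x := π a) ⟨2, by rw [sq, h]; exact h ▸ hazz⟩)
    have hbz' : π b ≠ π z := by
      intro h
      exact hb0 (IsNilpotent.eq_zero (x := π b) ⟨2, by rw [sq, h]; exact h ▸ hbzz⟩)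
    exact horth (π z) ⟨⟨haz', ha0, hz0, hazz⟩, ⟨hbz', hb0, hz0, hbzz⟩⟩
end

section
/- Let R be a commutative ring with nonzero identity and I a proper ideal of R. Then the number of vertices of Γ_I(R) equals |I| times the number of vertices of Γ(R/I). -/
open Ideal Polynomial

theorem stmt14 {R : Type*} [CommRing R] [Nontrivial R] (I : Ideal R) (hI : I ≠ ⊤) :
    Cardinal.mk (idealVertexSet I) =
      Cardinal.mk I * Cardinal.mk (zdVertexSet (R ⧸ I)) := by
  classical
  set f := Ideal.Quotient.mk I with hf
  have hpre : idealVertexSet I = f ⁻¹' zdVertexSet (R ⧸ I) := by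
    ext x
    simp only [idealVertexSet, zdVertexSet, Set.mem_setOf_eq, Set.mem_preimage]
    constructor
    · rintro ⟨hx, y, hy, hxy⟩
      refine ⟨by simpa [hf, Ideal.Quotient.eq_zero_iff_mem] using hx, f y,
        by simpa [hf, Ideal.Quotient.eq_zero_iff_mem] using hy, ?_⟩
      rw [← _root_.map_mul]; exact (Ideal.Quotient.eq_zero_iff_mem).2 hxy
    · rintro ⟨hx, w, hw, hxw⟩
      obtain ⟨y, rfl⟩ := Ideal.Quotient.mk_surjective w
      exact ⟨fun h => hx ((Ideal.Quotient.eq_zero_iff_mem).2 h),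
        y, fun h => hw ((Ideal.Quotient.eq_zero_iff_mem).2 h),
        (Ideal.Quotient.eq_zero_iff_mem).1 (by rw [← _root_.map_mul] at hxw; exact hxw)⟩
  choose sec hsec using fun z : R ⧸ I => Ideal.Quotient.mk_surjective z
  let e : (f ⁻¹' zdVertexSet (R ⧸ I)) ≃ (zdVertexSet (R ⧸ I)) × I :=
    { toFun := fun x => (⟨f x.1, x.2⟩, ⟨x.1 - sec (f x.1), by
        rw [← Ideal.Quotient.eq_zero_iff_mem]
        show f _ = 0
        rw [map_sub, hsec, sub_self]⟩)
      invFun := fun p => ⟨sec p.1.1 + p.2.1, by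
        show f (sec p.1.1 + p.2.1) ∈ zdVertexSet (R ⧸ I)
        rw [map_add, hsec]
        have : f p.2.1 = 0 := Ideal.Quotient.eq_zero_iff_mem.2 p.2.2
        rw [this, add_zero]
        exact p.1.2⟩
      left_inv := fun x => by
        apply Subtype.ext
        simp
      right_inv := fun p => by
        have h1 : f (sec p.1.1 + p.2.1) = p.1.1 := by
          rw [map_add, hsec]
          have : f p.2.1 = 0 := Ideal.Quotient.eq_zero_iff_mem.2 p.2.2
          rw [this, add_zero]
        refine Prod.ext (Subtype.ext ?_) (Subtype.ext ?_) <;> simp [h1]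
    }
  rw [hpre, Cardinal.mk_congr e, Cardinal.mk_prod, Cardinal.lift_id, Cardinal.lift_id, mul_comm]
end

section
/- Let R be a commutative ring with nonzero identity and I a radical ideal of R such that Γ(R/I) is uniquely complemented. If x ⊥ y in Γ_I(R), then the annihilator of y + I in R/I equals the annihilator of z + I in R/I for any z with x ⊥ z in Γ_I(R). -/
open Ideal Polynomial

lemma orth_push {R : Type*} [CommRing R] (I : Ideal R) (hrad : I.radical = I)
    (x y : R) (h : Orth (idealGraph I) x y) :
    Orth (zdGraph (R ⧸ I)) (Ideal.Quotient.mk I x) (Ideal.Quotient.mk I y) := by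
  obtain ⟨⟨hne, hxI, hyI, hxyI⟩, hcom⟩ := h
  have hx0 : Ideal.Quotient.mk I x ≠ 0 := by
    simpa [Ideal.Quotient.eq_zero_iff_mem] using hxI
  have hy0 : Ideal.Quotient.mk I y ≠ 0 := by
    simpa [Ideal.Quotient.eq_zero_iff_mem] using hyI
  have hmulz : Ideal.Quotient.mk I x * Ideal.Quotient.mk I y = 0 := by
    rw [← _root_.map_mul, Ideal.Quotient.eq_zero_iff_mem]; exact hxyI
  have hneq : Ideal.Quotient.mk I x ≠ Ideal.Quotient.mk I y := by
    intro heq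
    have hx2 : x * x ∈ I := by
      have : Ideal.Quotient.mk I (x * x) = 0 := by
        rw [_root_.map_mul, heq]; rw [heq] at hmulz; exact hmulz
      rwa [Ideal.Quotient.eq_zero_iff_mem] at this
    have : x ∈ I.radical := by
      rw [Ideal.mem_radical_iff]; exact ⟨2, by rwa [pow_two]⟩
    rw [hrad] at this; exact hxI this
  refine ⟨⟨hneq, hx0, hy0, hmulz⟩, ?_⟩
  rintro c ⟨⟨hcx, _, hc0, hxc⟩, ⟨hcy, _, _, hyc⟩⟩
  obtain ⟨c', rfl⟩ := Ideal.Quotient.mk_surjective c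
  refine hcom c' ⟨⟨?_, hxI, ?_, ?_⟩, ⟨?_, hyI, ?_, ?_⟩⟩
  · intro h; exact hcx (by rw [h])
  · simpa [Ideal.Quotient.eq_zero_iff_mem] using hc0
  · rwa [← _root_.map_mul, Ideal.Quotient.eq_zero_iff_mem] at hxc
  · intro h; exact hcy (by rw [h])
  · simpa [Ideal.Quotient.eq_zero_iff_mem] using hc0
  · rwa [← _root_.map_mul, Ideal.Quotient.eq_zero_iff_mem] at hyc

lemma sq_notmem {R : Type*} [CommRing R] (I : Ideal R) (hrad : I.radical = I)
    (y : R) (hyI : y ∉ I) : Ideal.Quotient.mk I y * Ideal.Quotient.mk I y ≠ 0 := by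
  intro h
  rw [← _root_.map_mul, Ideal.Quotient.eq_zero_iff_mem] at h
  have : y ∈ I.radical := by
    rw [Ideal.mem_radical_iff]; exact ⟨2, by rwa [pow_two]⟩
  rw [hrad] at this; exact hyI this

theorem stmt17 {R : Type*} [CommRing R] [Nontrivial R] (I : Ideal R)
    (hrad : I.radical = I)
    (huc : UniquelyComplemented (zdGraph (R ⧸ I)) (zdVertexSet (R ⧸ I)))
    (x y : R) (hxy : Orth (idealGraph I) x y) :
    ∀ z : R, Orth (idealGraph I) x z →
      {s : R ⧸ I | s * Ideal.Quotient.mk I y = 0} =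
        {s : R ⧸ I | s * Ideal.Quotient.mk I z = 0} := by
  intro z hxz
  have hoy := orth_push I hrad x y hxy
  have hoz := orth_push I hrad x z hxz
  have hsim := huc.2 _ _ _ hoy hoz
  obtain ⟨hnadj, hnb⟩ := hsim
  have hy0 : Ideal.Quotient.mk I y ≠ 0 := by
    simpa [Ideal.Quotient.eq_zero_iff_mem] using hxy.1.2.2.1
  have hz0 : Ideal.Quotient.mk I z ≠ 0 := by
    simpa [Ideal.Quotient.eq_zero_iff_mem] using hxz.1.2.2.1
  have hy2 := sq_notmem I hrad y hxy.1.2.2.1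
  have hz2 := sq_notmem I hrad z hxz.1.2.2.1
  ext s
  simp only [Set.mem_setOf_eq]
  constructor
  · intro hs
    by_cases hs0 : s = 0
    · simp [hs0]
    have hsy : s ≠ Ideal.Quotient.mk I y := by
      rintro rfl; exact hy2 hs
    have hadj : (zdGraph (R ⧸ I)).Adj (Ideal.Quotient.mk I y) s :=
      ⟨fun h => hsy h.symm, hy0, hs0, by rwa [mul_comm]⟩
    have := (hnb s).mp hadj
    rw [mul_comm]; exact this.2.2.2
  · intro hs
    by_cases hs0 : s = 0
    · simp [hs0]
    have hsz : s ≠ Ideal.Quotient.mk I z := by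
      rintro rfl; exact hz2 hs
    have hadj : (zdGraph (R ⧸ I)).Adj (Ideal.Quotient.mk I z) s :=
      ⟨fun h => hsz h.symm, hz0, hs0, by rwa [mul_comm]⟩
    have := (hnb s).mpr hadj
    rw [mul_comm]; exact this.2.2.2
end
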